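/- For a system of n stations running algorithm Move-Big-To-Front against a leaky-bucket adversary of injection rate 1 and burstiness b+1, the total number of silent rounds in any time segment T during which at least n² packets are always present in queues is strictly less than n², and consequently the total number of packets in queues never exceeds 2(n² + b). -/

import Mathlib

/-- Move the station `a` to the front of the list. -/
def moveToFront {α : Type*} [DecidableEq α] (a : α) (l : List α) : List α :=
  a :: l.erase a

/-- The station cyclically following `a` in the list `l`. -/
def nextAfter {α : Type*} [DecidableEq α] (a : α) (l : List α) : α :=
  l.getD ((l.idxOf a + 1) % l.length) a

namespace MBTFAux
open List

variable {α : Type*} [DecidableEq α]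

lemma sublist_of_cons_of_not_mem {s l : List α} {w : α} (h : s <+ w :: l) (hw : w ∉ s) :
    s <+ l := by
  cases h with
  | cons _ h => exact h
  | cons_cons _ h => exact absurd List.mem_cons_self hw

lemma sublist_erase {s l : List α} {w : α} (h : s <+ l) (hw : w ∉ s) : s <+ l.erase w := by
  induction l generalizing s with
  | nil => simpa using h
  | cons x xs ih =>
    by_cases hx : x = w
    · subst hx
      rw [show (x :: xs).erase x = xs by simp [List.erase_cons]]
      exact sublist_of_cons_of_not_mem h hw
    · rw [List.erase_cons_tail (by simpa using hx)]
      cases h with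
      | cons _ h => exact (ih h hw).cons x
      | cons_cons _ h =>
        exact (ih h (fun hm => hw (List.mem_cons_of_mem _ hm))).cons₂ x

lemma bef_moveToFront_other {u v w : α} {l : List α} (h : [u, v] <+ l)
    (hwu : w ≠ u) (hwv : w ≠ v) : [u, v] <+ moveToFront w l := by
  refine (sublist_erase h ?_).cons w
  intro hm
  rcases List.mem_cons.1 hm with h' | h'
  · exact hwu h'
  · have : w = v := by simpa using h'
    exact hwv this

lemma bef_moveToFront_self {u v : α} {l : List α} (hv : v ∈ l) (hvu : v ≠ u) :
    [u, v] <+ moveToFront u l := by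
  refine List.Sublist.cons₂ u ?_
  rw [List.singleton_sublist]
  exact (List.mem_erase_of_ne hvu).2 hv

lemma bef_asymm {u v : α} {l : List α} (hl : l.Nodup) (h1 : [u, v] <+ l)
    (h2 : [v, u] <+ l) : False := by
  induction l with
  | nil => simp at h1
  | cons x xs ih =>
    rcases List.nodup_cons.1 hl with ⟨hx, hxs⟩
    cases h1 with
    | cons _ h1 =>
      cases h2 with
      | cons _ h2 => exact ih hxs h1 h2
      | cons_cons _ h2 =>
        -- x = v, [u] <+ xs ; and [u,v] <+ xs so v ∈ xs
        exact hx (h1.subset (by simp))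
    | cons_cons _ h1 =>
      -- x = u, [v] <+ xs
      cases h2 with
      | cons _ h2 => exact hx (h2.subset (by simp))
      | cons_cons _ h2 => exact hx (h1.subset (by simp))

lemma bef_total {u v : α} {l : List α} (hu : u ∈ l) (hv : v ∈ l) (huv : u ≠ v) :
    [u, v] <+ l ∨ [v, u] <+ l := by
  induction l with
  | nil => simp at hu
  | cons x xs ih =>
    by_cases hxu : x = u
    · subst hxu
      left
      refine List.Sublist.cons₂ x ?_
      rw [List.singleton_sublist]
      rcases List.mem_cons.1 hv with h | h
      · exact absurd h.symm huv
      · exact h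
    · by_cases hxv : x = v
      · subst hxv
        right
        refine List.Sublist.cons₂ x ?_
        rw [List.singleton_sublist]
        rcases List.mem_cons.1 hu with h | h
        · exact absurd h.symm hxu
        · exact h
      · rcases List.mem_cons.1 hu with h | h
        · exact absurd h.symm hxu
        · rcases List.mem_cons.1 hv with h' | h'
          · exact absurd h' (fun hh => hxv hh.symm)
          · rcases ih h h' with hh | hh
            · exact Or.inl (hh.cons x)
            · exact Or.inr (hh.cons x)

lemma bef_of_indices (L : List α) {i j : ℕ} (hj : j < L.length) (hij : i < j) :
    [L[i]'(lt_trans hij hj), L[j]] <+ L := by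
  have hi : i < L.length := lt_trans hij hj
  have h1 : L[j] ∈ L.drop (i + 1) := by
    have hj' : j - (i + 1) < (L.drop (i + 1)).length := by
      rw [List.length_drop]; omega
    have : (L.drop (i + 1))[j - (i + 1)] = L[j] := by
      rw [List.getElem_drop]
      congr 1
      omega
    rw [← this]
    exact List.getElem_mem _
  have h2 : [L[i], L[j]] <+ L[i] :: L.drop (i + 1) :=
    List.Sublist.cons₂ _ (List.singleton_sublist.2 h1)
  have h3 : L[i] :: L.drop (i + 1) = L.drop i := List.getElem_cons_drop hi
  calc [L[i], L[j]] <+ L[i] :: L.drop (i + 1) := h2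
    _ = L.drop i := h3
    _ <+ L := List.drop_sublist i L

lemma indexOf_getElem_of_nodup {l : List α} (hl : l.Nodup) {i : ℕ} (hi : i < l.length) :
    l.idxOf l[i] = i := by
  have hm : l[i] ∈ l := List.getElem_mem hi
  have hlt : l.idxOf l[i] < l.length := List.idxOf_lt_length_iff.2 hm
  have : l[l.idxOf l[i]] = l[i] := List.getElem_idxOf hlt
  exact (hl.getElem_inj_iff.1 this)

lemma mod_shift_ne {nn p i j : ℕ} (hp : p < nn) (hi : i < nn) (hj : j < nn) (hij : i ≠ j)
    (h : (p + i) % nn = (p + j) % nn) : False := by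
  rcases Nat.lt_or_ge i j with hlt | hge
  · have hd : 0 < j - i ∧ j - i < nn := by omega
    have h' : (p + i + (j - i)) % nn = (p + i) % nn := by
      rw [show p + i + (j - i) = p + j by omega, h]
    have hdvd : nn ∣ (j - i) := by
      have : (p + i + (j - i)) % nn = (p + i + 0) % nn := by simpa using h'
      have hme : j - i ≡ 0 [MOD nn] := Nat.ModEq.add_left_cancel' (p + i) this
      simpa [Nat.modEq_zero_iff_dvd] using hme
    exact absurd (Nat.le_of_dvd hd.1 hdvd) (by omega)
  · have hlt : j < i := by omega
    have hd : 0 < i - j ∧ i - j < nn := by omega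
    have h' : (p + j + (i - j)) % nn = (p + j) % nn := by
      rw [show p + j + (i - j) = p + i by omega, h]
    have hdvd : nn ∣ (i - j) := by
      have : (p + j + (i - j)) % nn = (p + j + 0) % nn := by simpa using h'
      have hme : i - j ≡ 0 [MOD nn] := Nat.ModEq.add_left_cancel' (p + j) this
      simpa [Nat.modEq_zero_iff_dvd] using hme
    exact absurd (Nat.le_of_dvd hd.1 hdvd) (by omega)

end MBTFAux

open List

section Dyn

variable {n : ℕ}
  (queue : ℕ → Fin n → ℕ)
  (order : ℕ → List (Fin n))
  (token : ℕ → Fin n)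

-- `Step` bundles the dynamics we need.
def Step : Prop :=
  ∀ t, (n ≤ queue t (token t) ∧
          order (t + 1) = moveToFront (token t) (order t) ∧ token (t + 1) = token t) ∨
       (queue t (token t) < n ∧
          order (t + 1) = order t ∧ token (t + 1) = nextAfter (token t) (order t))

variable (hstep : Step queue order token)
include hstep

lemma perm_all (horder0 : order 0 = List.finRange n) :
    ∀ t, (order t).Perm (List.finRange n) := by
  intro t
  induction t with
  | zero => rw [horder0]
  | succ t ih =>
    rcases hstep t with ⟨_, ho, _⟩ | ⟨_, ho, _⟩
    · rw [ho]
      have hmem : token t ∈ order t := by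
        rw [ih.mem_iff]; exact List.mem_finRange _
      exact ((List.perm_cons_erase hmem).symm).trans ih
    · rw [ho]; exact ih

variable (horder0 : order 0 = List.finRange n)
include horder0

lemma order_length (t : ℕ) : (order t).length = n := by
  rw [(perm_all queue order token hstep horder0 t).length_eq, List.length_finRange]

lemma order_nodup (t : ℕ) : (order t).Nodup :=
  ((perm_all queue order token hstep horder0 t).nodup_iff).2 (List.nodup_finRange n)

lemma order_mem (t : ℕ) (x : Fin n) : x ∈ order t := by
  rw [(perm_all queue order token hstep horder0 t).mem_iff]; exact List.mem_finRange _

end Dyn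

section Dyn2

variable {n : ℕ}
  (queue : ℕ → Fin n → ℕ)
  (order : ℕ → List (Fin n))
  (token : ℕ → Fin n)
  (hstep : Step queue order token)
  (horder0 : order 0 = List.finRange n)

include hstep horder0

lemma walk (β k : ℕ)
    (hs : ∀ j, j < k → queue (β + j) (token (β + j)) < n) :
    order (β + k) = order β ∧
    token (β + k) = (order β).getD (((order β).idxOf (token β) + k) % n) (token β) := by
  have hn : 0 < n := (token 0).pos
  have hlen := order_length queue order token hstep horder0
  have hnd := order_nodup queue order token hstep horder0
  have hmemo := order_mem queue order token hstep horder0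
  have hp : (order β).idxOf (token β) < n := by
    have h := List.idxOf_lt_length_iff.2 (hmemo β (token β))
    rwa [hlen β] at h
  induction k with
  | zero =>
    refine ⟨rfl, ?_⟩
    simp only [Nat.add_zero]
    rw [Nat.mod_eq_of_lt hp,
      List.getD_eq_getElem _ _ (by rw [hlen]; exact hp), List.getElem_idxOf]
  | succ k ih =>
    obtain ⟨ho, ht⟩ := ih (fun j hj => hs j (Nat.lt_succ_of_lt hj))
    have hsk := hs k (Nat.lt_succ_self k)
    rcases hstep (β + k) with ⟨hbig, _, _⟩ | ⟨_, ho', ht'⟩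
    · omega
    · have hm : ((order β).idxOf (token β) + k) % n < (order β).length := by
        rw [hlen]; exact Nat.mod_lt _ hn
      constructor
      · rw [show β + (k+1) = (β + k) + 1 by omega, ho', ho]
      · rw [show β + (k+1) = (β + k) + 1 by omega, ht', ho, nextAfter, ht,
          List.getD_eq_getElem _ _ hm]
        rw [MBTFAux.indexOf_getElem_of_nodup (hnd β) hm, hlen]
        have h1 : (((order β).idxOf (token β) + k) % n + 1) % n
            = ((order β).idxOf (token β) + (k + 1)) % n := by
          rw [Nat.mod_add_mod, Nat.add_assoc]
        rw [h1]
        have hm2 : ((order β).idxOf (token β) + (k+1)) % n < (order β).length := by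
          rw [hlen]; exact Nat.mod_lt _ hn
        rw [List.getD_eq_getElem _ _ hm2, List.getD_eq_getElem _ _ hm2]

omit hstep horder0

lemma mono (inject : ℕ → Fin n → ℕ) (q : Fin n)
    (hqueue : ∀ t p, queue (t + 1) p =
      queue t p + inject t p - (if p = token t ∧ 1 ≤ queue t p then 1 else 0))
    (t₁ t₂ : ℕ) (h12 : t₁ ≤ t₂) (hnv : ∀ s, t₁ ≤ s → s < t₂ → token s ≠ q) :
    queue t₁ q ≤ queue t₂ q := by
  induction t₂, h12 using Nat.le_induction with
  | base => exact le_rfl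
  | succ t₂ h12 ih =>
    refine le_trans (ih (fun s hs hs' => hnv s hs (by omega))) ?_
    rw [hqueue t₂ q]
    have hne : ¬(q = token t₂ ∧ 1 ≤ queue t₂ q) := by
      intro hc
      exact hnv t₂ h12 (Nat.lt_succ_self _) hc.1.symm
    rw [if_neg hne]
    omega

lemma drain (inject : ℕ → Fin n → ℕ) (q : Fin n)
    (hqueue : ∀ t p, queue (t + 1) p =
      queue t p + inject t p - (if p = token t ∧ 1 ≤ queue t p then 1 else 0))
    (t₁ t₂ : ℕ) (h12 : t₁ ≤ t₂) :
    queue t₁ q ≤ queue t₂ q +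
      ((Finset.Ico t₁ t₂).filter (fun τ => token τ = q ∧ 1 ≤ queue τ q)).card := by
  induction t₂, h12 using Nat.le_induction with
  | base => simp
  | succ t₂ h12 ih =>
    have hsplit : Finset.Ico t₁ (t₂ + 1) = insert t₂ (Finset.Ico t₁ t₂) := by
      ext x
      simp only [Finset.mem_Ico, Finset.mem_insert]
      omega
    rw [hsplit, Finset.filter_insert]
    by_cases hP : token t₂ = q ∧ 1 ≤ queue t₂ q
    · rw [if_pos hP, Finset.card_insert_of_notMem (by simp)]
      have : queue t₂ q ≤ queue (t₂ + 1) q + 1 := by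
        rw [hqueue t₂ q]
        split_ifs <;> omega
      omega
    · rw [if_neg hP]
      have : queue t₂ q ≤ queue (t₂ + 1) q := by
        rw [hqueue t₂ q]
        have : ¬(q = token t₂ ∧ 1 ≤ queue t₂ q) := by
          intro hc
          exact hP ⟨hc.1.symm, hc.2⟩
        rw [if_neg this]
        omega
      omega

lemma pigeon (hn : 0 < n) (t : ℕ) (htot : n ^ 2 ≤ ∑ p, queue t p) :
    ∃ q, n ≤ queue t q := by
  by_contra hc
  push_neg at hc
  have hsum : ∑ p, queue t p ≤ ∑ _p : Fin n, (n - 1) :=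
    Finset.sum_le_sum (fun p _ => by have := hc p; omega)
  rw [Finset.sum_const, Finset.card_univ, Fintype.card_fin, smul_eq_mul] at hsum
  have h2 : n ^ 2 = n * n := sq n
  have hmul : n * (n - 1) + n = n * n := by
    cases n with
    | zero => omega
    | succ m =>
      simp only [Nat.succ_sub_one]
      ring
  omega

end Dyn2

section Dyn3

variable {n : ℕ}
  (queue : ℕ → Fin n → ℕ)
  (order : ℕ → List (Fin n))
  (token : ℕ → Fin n)
  (inject : ℕ → Fin n → ℕ)
  (hstep : Step queue order token)
  (horder0 : order 0 = List.finRange n)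
  (hqueue : ∀ t p, queue (t + 1) p =
      queue t p + inject t p - (if p = token t ∧ 1 ≤ queue t p then 1 else 0))

include hstep horder0 hqueue

lemma lem5 (β : ℕ) (htot : n ^ 2 ≤ ∑ p, queue β p)
    (hs : ∀ i, i < n → queue (β + i) (token (β + i)) < n) : False := by
  have hn : 0 < n := (token 0).pos
  have hlen := order_length queue order token hstep horder0
  have hnd := order_nodup queue order token hstep horder0
  have hmemo := order_mem queue order token hstep horder0
  obtain ⟨q, hq⟩ := pigeon queue hn β htot
  set L := order β with hL
  have hp : L.idxOf (token β) < n := by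
    have h := List.idxOf_lt_length_iff.2 (hmemo β (token β))
    rwa [hlen β] at h
  have hq' : L.idxOf q < n := by
    have h := List.idxOf_lt_length_iff.2 (hmemo β q)
    rwa [hlen β] at h
  set p₀ := L.idxOf (token β) with hp₀
  set iq := (L.idxOf q + n - p₀) % n with hiq
  have hiqlt : iq < n := Nat.mod_lt _ hn
  have hmodeq : (p₀ + iq) % n = L.idxOf q := by
    rw [hiq, Nat.add_comm p₀, Nat.mod_add_mod,
      show L.idxOf q + n - p₀ + p₀ = L.idxOf q + n by omega,
      Nat.add_mod_right, Nat.mod_eq_of_lt hq']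
  have htok : ∀ j, j ≤ iq → token (β + j) = L.getD ((p₀ + j) % n) (token β) := by
    intro j hj
    exact (walk queue order token hstep horder0 β j
      (fun i hi => hs i (by omega))).2
  have htokq : token (β + iq) = q := by
    rw [htok iq le_rfl, hmodeq, List.getD_eq_getElem _ _ (by rw [hlen]; exact hq'),
      List.getElem_idxOf]
  have hnv : ∀ s, β ≤ s → s < β + iq → token s ≠ q := by
    intro s hs1 hs2 hcq
    obtain ⟨j, rfl, hjlt⟩ : ∃ j, s = β + j ∧ j < iq := ⟨s - β, by omega, by omega⟩
    rw [htok j (le_of_lt hjlt)] at hcq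
    have hmj : (p₀ + j) % n < L.length := by rw [hlen]; exact Nat.mod_lt _ hn
    rw [List.getD_eq_getElem _ _ hmj] at hcq
    have : L.idxOf q = (p₀ + j) % n := by
      rw [← hcq, MBTFAux.indexOf_getElem_of_nodup (hnd β) hmj]
    have heq : (p₀ + j) % n = (p₀ + iq) % n := by rw [hmodeq, this]
    exact MBTFAux.mod_shift_ne hp (show j < n by omega) hiqlt (by omega) heq
  have hge : n ≤ queue (β + iq) q :=
    le_trans hq (mono queue token inject q hqueue β (β + iq) (by omega) hnv)
  have := hs iq hiqlt
  rw [htokq] at this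
  omega

end Dyn3

open Classical in
noncomputable def nextBig {n : ℕ} (queue : ℕ → Fin n → ℕ) (token : ℕ → Fin n) (t : ℕ) : ℕ :=
  if h : ∃ s, t < s ∧ n ≤ queue s (token s) then Nat.find h else 0

section Dyn4

variable {n : ℕ}
  (queue : ℕ → Fin n → ℕ)
  (order : ℕ → List (Fin n))
  (token : ℕ → Fin n)
  (inject : ℕ → Fin n → ℕ)
  (hstep : Step queue order token)
  (horder0 : order 0 = List.finRange n)
  (hqueue : ∀ t p, queue (t + 1) p =
      queue t p + inject t p - (if p = token t ∧ 1 ≤ queue t p then 1 else 0))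
  (a len : ℕ)
  (htot : ∀ t ∈ Finset.Ico a (a + len), n ^ 2 ≤ ∑ p, queue t p)

lemma nextBig_spec {t : ℕ} (h : ∃ s, t < s ∧ n ≤ queue s (token s)) :
    t < nextBig queue token t ∧
    n ≤ queue (nextBig queue token t) (token (nextBig queue token t)) ∧
    ∀ ρ, t < ρ → ρ < nextBig queue token t → queue ρ (token ρ) < n := by
  classical
  rw [nextBig]
  rw [dif_pos h]
  refine ⟨(Nat.find_spec h).1, (Nat.find_spec h).2, ?_⟩
  intro ρ hρ1 hρ2
  have := Nat.find_min h hρ2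
  push_neg at this
  exact this hρ1

include hstep horder0 hqueue htot

lemma exists_nextBig {t : ℕ} (hseg1 : a ≤ t) (hseg2 : t < a + len)
    (hsm : queue t (token t) < n) : ∃ s, t < s ∧ n ≤ queue s (token s) := by
  by_contra hc
  push_neg at hc
  refine lem5 queue order token inject hstep horder0 hqueue t
    (htot t (Finset.mem_Ico.2 ⟨hseg1, hseg2⟩)) ?_
  intro i hi
  rcases Nat.eq_zero_or_pos i with rfl | hpos
  · simpa using hsm
  · exact hc (t + i) (by omega)

lemma small_run_token_ne {x y : ℕ} (hxy : x < y)
    (hall : ∀ ρ, x ≤ ρ → ρ < y → queue ρ (token ρ) < n)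
    (htotx : n ^ 2 ≤ ∑ p, queue x p) : token y ≠ token x := by
  have hn : 0 < n := (token 0).pos
  have hlen := order_length queue order token hstep horder0
  have hnd := order_nodup queue order token hstep horder0
  have hmemo := order_mem queue order token hstep horder0
  have hylt : y - x < n := by
    by_contra hge
    push_neg at hge
    exact lem5 queue order token inject hstep horder0 hqueue x htotx
      (fun i hi => hall (x + i) (by omega) (by omega))
  have hp : (order x).idxOf (token x) < n := by
    have h := List.idxOf_lt_length_iff.2 (hmemo x (token x))
    rwa [hlen x] at h
  obtain ⟨ho, ht⟩ := walk queue order token hstep horder0 x (y - x)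
    (fun j hj => hall (x + j) (by omega) (by omega))
  rw [show x + (y - x) = y by omega] at ht
  intro hEq
  rw [hEq] at ht
  have hm : ((order x).idxOf (token x) + (y - x)) % n < (order x).length := by
    rw [hlen]; exact Nat.mod_lt _ hn
  rw [List.getD_eq_getElem _ _ hm] at ht
  have : (order x).idxOf (token x) = ((order x).idxOf (token x) + (y - x)) % n := by
    conv_lhs => rw [ht]
    rw [MBTFAux.indexOf_getElem_of_nodup (hnd x) hm]
  have heq0 : ((order x).idxOf (token x) + 0) % n
      = ((order x).idxOf (token x) + (y - x)) % n := by
    rw [Nat.add_zero, Nat.mod_eq_of_lt hp]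
    exact this
  exact MBTFAux.mod_shift_ne hp (show 0 < n from hn) hylt (by omega) heq0

omit hstep horder0 hqueue htot in
lemma order_after_big {s : ℕ} (hstep : Step queue order token)
    (hbig : n ≤ queue s (token s)) :
    order (s + 1) = moveToFront (token s) (order s) ∧ token (s + 1) = token s := by
  rcases hstep s with ⟨_, h1, h2⟩ | ⟨hsm, _, _⟩
  · exact ⟨h1, h2⟩
  · omega

lemma chargePos {t : ℕ} (hseg1 : a ≤ t) (hseg2 : t < a + len)
    (hsm : queue t (token t) < n)
    (hch : ∃ σ, a ≤ σ ∧ σ < t ∧ n ≤ queue σ (token σ)) :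
    token (nextBig queue token t) ≠ token t ∧
    [token t, token (nextBig queue token t)] <+ order t := by
  classical
  have hn : 0 < n := (token 0).pos
  have hlen := order_length queue order token hstep horder0
  have hnd := order_nodup queue order token hstep horder0
  have hmemo := order_mem queue order token hstep horder0
  obtain ⟨σ₀, hσa, hσt, hσb⟩ := hch
  -- last big round before t
  set P : ℕ → Prop := fun σ => a ≤ σ ∧ n ≤ queue σ (token σ) with hP
  have hspec : P (Nat.findGreatest P (t - 1)) :=
    Nat.findGreatest_spec (m := σ₀) (by omega) ⟨hσa, hσb⟩
  set s' := Nat.findGreatest P (t - 1) with hs'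
  have hs'le : s' ≤ t - 1 := Nat.findGreatest_le _
  have hs'lt : s' < t := by omega
  have hmax : ∀ ρ, s' < ρ → ρ < t → queue ρ (token ρ) < n := by
    intro ρ h1 h2
    by_contra hbig
    push_neg at hbig
    exact Nat.findGreatest_is_greatest (n := t - 1) (k := ρ) h1 (by omega)
      ⟨by omega, hbig⟩
  -- next big round after t
  have hex := exists_nextBig queue order token inject hstep horder0 hqueue a len htot
    hseg1 hseg2 hsm
  obtain ⟨hts, hsbig, hsmin⟩ := nextBig_spec queue token hex
  set s := nextBig queue token t with hsdef
  -- all rounds in (s', s) are small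
  have hno : ∀ j, j < s - s' - 1 → queue (s' + 1 + j) (token (s' + 1 + j)) < n := by
    intro j hj
    rcases Nat.lt_trichotomy (s' + 1 + j) t with h | h | h
    · exact hmax _ (by omega) h
    · rw [h]; exact hsm
    · exact hsmin _ h (by omega)
  have hsn : s ≤ s' + n := by
    by_contra hgt
    push_neg at hgt
    refine lem5 queue order token inject hstep horder0 hqueue (s' + 1)
      (htot (s' + 1) (Finset.mem_Ico.2 ⟨by omega, by omega⟩)) ?_
    intro i hi
    exact hno i (by omega)
  obtain ⟨hofb, htfb⟩ := order_after_big queue order token hstep hspec.2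
  set L := order (s' + 1) with hL
  have hidx0 : L.idxOf (token (s' + 1)) = 0 := by
    have hcons : L = token s' :: (order s').erase (token s') := hofb
    rw [htfb, hcons, List.idxOf_cons_self]
  have hwalk := fun (k : ℕ) (hk : k ≤ s - s' - 1) =>
    walk queue order token hstep horder0 (s' + 1) k (fun j hj => hno j (by omega))
  set k₁ := t - s' - 1 with hk₁
  set k₂ := s - s' - 1 with hk₂
  have hk12 : k₁ < k₂ := by omega
  have hk₂n : k₂ < n := by omega
  obtain ⟨ho1, ht1⟩ := hwalk k₁ (by omega)
  obtain ⟨ho2, ht2⟩ := hwalk k₂ (by omega)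
  rw [show s' + 1 + k₁ = t by omega] at ho1 ht1
  rw [show s' + 1 + k₂ = s by omega] at ho2 ht2
  rw [hidx0] at ht1 ht2
  have hm1 : (0 + k₁) % n < L.length := by
    rw [order_length queue order token hstep horder0]; exact Nat.mod_lt _ hn
  have hm2 : (0 + k₂) % n < L.length := by
    rw [order_length queue order token hstep horder0]; exact Nat.mod_lt _ hn
  rw [List.getD_eq_getElem _ _ hm1] at ht1
  rw [List.getD_eq_getElem _ _ hm2] at ht2
  have hmod1 : (0 + k₁) % n = k₁ := by rw [Nat.zero_add]; exact Nat.mod_eq_of_lt (by omega)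
  have hmod2 : (0 + k₂) % n = k₂ := by rw [Nat.zero_add]; exact Nat.mod_eq_of_lt hk₂n
  have hLlen : L.length = n := order_length queue order token hstep horder0 (s' + 1)
  have hk₁L : k₁ < L.length := by omega
  have hk₂L : k₂ < L.length := by omega
  have ht1' : token t = L[k₁] := by
    rw [ht1]; congr 1
  have ht2' : token s = L[k₂] := by
    rw [ht2]; congr 1
  constructor
  · rw [ht1', ht2']
    intro hEq
    have := (hnd (s' + 1)).getElem_inj_iff.1 hEq
    omega
  · rw [ht1', ht2', ho1]
    exact MBTFAux.bef_of_indices L hk₂L hk12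

omit hqueue htot in
lemma flip_lemma {u v : Fin n} (huv : u ≠ v) (x : ℕ) :
    ∀ m : ℕ, [u, v] <+ order x → [v, u] <+ order (x + m) →
    ∃ r, x ≤ r ∧ r < x + m ∧ n ≤ queue r (token r) ∧ token r = v := by
  have hnd := order_nodup queue order token hstep horder0
  have hmemo := order_mem queue order token hstep horder0
  intro m
  induction m with
  | zero =>
    intro h1 h2
    exact (MBTFAux.bef_asymm (hnd x) h1 (by simpa using h2)).elim
  | succ m ih =>
    intro h1 h2
    rcases hstep (x + m) with ⟨hbig, ho, _⟩ | ⟨_, ho, _⟩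
    · by_cases hwv : token (x + m) = v
      · exact ⟨x + m, by omega, by omega, hbig, hwv⟩
      · by_cases hwu : token (x + m) = u
        · rw [show x + (m+1) = (x+m) + 1 by omega, ho, hwu] at h2
          have h3 : [u, v] <+ moveToFront u (order (x + m)) :=
            MBTFAux.bef_moveToFront_self (hmemo _ v) (Ne.symm huv)
          have hnd' : (moveToFront u (order (x + m))).Nodup := by
            rw [← hwu, ← ho]
            exact hnd _
          exact (MBTFAux.bef_asymm hnd' h3 h2).elim
        · rcases MBTFAux.bef_total (hmemo (x+m) u) (hmemo (x+m) v) huv with hb | hb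
          · have h3 : [u, v] <+ order (x + (m+1)) := by
              rw [show x + (m+1) = (x+m) + 1 by omega, ho]
              exact MBTFAux.bef_moveToFront_other hb hwu hwv
            exact (MBTFAux.bef_asymm (hnd _) h3 h2).elim
          · obtain ⟨r, hr1, hr2, hr3, hr4⟩ := ih h1 hb
            exact ⟨r, hr1, by omega, hr3, hr4⟩
    · rw [show x + (m+1) = (x+m) + 1 by omega, ho] at h2
      obtain ⟨r, hr1, hr2, hr3, hr4⟩ := ih h1 h2
      exact ⟨r, hr1, by omega, hr3, hr4⟩

lemma inj_charge {x y : ℕ} (hxy : x < y) (hteq : token y = token x)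
    (hsmx : queue x (token x) < n) (hsmy : queue y (token y) < n)
    (hsegx1 : a ≤ x) (hsegx2 : x < a + len)
    (hsegy1 : a ≤ y) (hsegy2 : y < a + len)
    (hchx : ∃ σ, a ≤ σ ∧ σ < x ∧ n ≤ queue σ (token σ))
    (hchy : ∃ σ, a ≤ σ ∧ σ < y ∧ n ≤ queue σ (token σ))
    (hsame : token (nextBig queue token x) = token (nextBig queue token y)) :
    ∃ r, x < r ∧ r < y ∧ n ≤ queue r (token r) ∧ token r = token x := by
  have hexx := exists_nextBig queue order token inject hstep horder0 hqueue a len htot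
    hsegx1 hsegx2 hsmx
  obtain ⟨hts₁, hbig₁, hmin₁⟩ := nextBig_spec queue token hexx
  set s₁ := nextBig queue token x with hs₁
  have hs₁y : s₁ < y := by
    rcases Nat.lt_trichotomy s₁ y with h | h | h
    · exact h
    · exfalso; rw [← h] at hsmy; omega
    · exfalso
      have hall : ∀ ρ, x ≤ ρ → ρ < y → queue ρ (token ρ) < n := by
        intro ρ h1 h2
        rcases Nat.eq_or_lt_of_le h1 with rfl | h1'
        · exact hsmx
        · exact hmin₁ ρ h1' (by omega)
      exact small_run_token_ne queue order token inject hstep horder0 hqueue a len htot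
        hxy hall (htot x (Finset.mem_Ico.2 ⟨hsegx1, hsegx2⟩)) hteq
  obtain ⟨hneq, _⟩ := chargePos queue order token inject hstep horder0 hqueue a len htot
    hsegx1 hsegx2 hsmx hchx
  obtain ⟨hneqy, hbefy⟩ := chargePos queue order token inject hstep horder0 hqueue a len htot
    hsegy1 hsegy2 hsmy hchy
  set u := token s₁ with hu
  obtain ⟨hofb, _⟩ := order_after_big queue order token hstep hbig₁
  have h1 : [u, token x] <+ order (s₁ + 1) := by
    rw [hofb]
    exact MBTFAux.bef_moveToFront_self
      (order_mem queue order token hstep horder0 s₁ (token x)) (Ne.symm hneq)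
  have h2 : [token x, u] <+ order y := by
    have := hbefy
    rw [hteq, ← hsame] at this
    exact this
  obtain ⟨r, hr1, hr2, hr3, hr4⟩ := flip_lemma queue order token hstep horder0 hneq
    (s₁ + 1) (y - s₁ - 1) h1 (by rw [show s₁ + 1 + (y - s₁ - 1) = y by omega]; exact h2)
  exact ⟨r, by omega, by omega, hr3, hr4⟩

end Dyn4

section Dyn5

variable {n : ℕ}
  (queue : ℕ → Fin n → ℕ)
  (order : ℕ → List (Fin n))
  (token : ℕ → Fin n)
  (inject : ℕ → Fin n → ℕ)
  (hstep : Step queue order token)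
  (horder0 : order 0 = List.finRange n)
  (hqueue : ∀ t p, queue (t + 1) p =
      queue t p + inject t p - (if p = token t ∧ 1 ≤ queue t p then 1 else 0))
  (a len : ℕ)
  (htot : ∀ t ∈ Finset.Ico a (a + len), n ^ 2 ≤ ∑ p, queue t p)

include hstep horder0 hqueue htot

lemma perv (v : Fin n) :
    ((Finset.Ico a (a + len)).filter (fun t => queue t (token t) = 0 ∧ token t = v ∧
      ∃ σ ∈ Finset.Ico a t, n ≤ queue σ (token σ))).card ≤ n - 1 := by
  classical
  have hn : 0 < n := (token 0).pos
  set F := (Finset.Ico a (a + len)).filter (fun t => queue t (token t) = 0 ∧ token t = v ∧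
      ∃ σ ∈ Finset.Ico a t, n ≤ queue σ (token σ)) with hF
  have hFmem : ∀ t ∈ F, a ≤ t ∧ t < a + len ∧ queue t (token t) = 0 ∧ token t = v ∧
      ∃ σ, a ≤ σ ∧ σ < t ∧ n ≤ queue σ (token σ) := by
    intro t ht
    rw [hF, Finset.mem_filter, Finset.mem_Ico] at ht
    obtain ⟨⟨h1, h2⟩, h3, h4, σ, hσ, h5⟩ := ht
    rw [Finset.mem_Ico] at hσ
    exact ⟨h1, h2, h3, h4, σ, hσ.1, hσ.2, h5⟩
  by_cases hFe : F = ∅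
  · rw [hFe]; simp
  · -- the charge map is injective on F
    have hinj : ∀ x ∈ F, ∀ y ∈ F, x < y →
        token (nextBig queue token x) ≠ token (nextBig queue token y) := by
      intro x hx y hy hxy hsame
      obtain ⟨hx1, hx2, hx3, hx4, hxch⟩ := hFmem x hx
      obtain ⟨hy1, hy2, hy3, hy4, hych⟩ := hFmem y hy
      -- derive a v-big round in (x, y)
      obtain ⟨rh, hrh1, hrh2, hrh3, hrh4⟩ := inj_charge queue order token inject hstep
        horder0 hqueue a len htot hxy (by rw [hx4, hy4]) (by omega) (by omega)
        hx1 hx2 hy1 hy2 hxch hych hsame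
      rw [hx4] at hrh4
      -- last v-big round before y ; here we use t_m := y itself
      set Q : ℕ → Prop := fun ρ => a ≤ ρ ∧ n ≤ queue ρ (token ρ) ∧ token ρ = v with hQ
      have hQdec : DecidablePred Q := fun _ => inferInstance
      have hQspec : Q (Nat.findGreatest Q (y - 1)) :=
        Nat.findGreatest_spec (m := rh) (by omega) ⟨by omega, hrh3, hrh4⟩
      set rs := Nat.findGreatest Q (y - 1) with hrs
      have hrsle : rs ≤ y - 1 := Nat.findGreatest_le _
      have hrslt : rs < y := by omega
      have hrsmax : ∀ ρ, rs < ρ → ρ < y → token ρ = v → queue ρ (token ρ) < n := by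
        intro ρ h1 h2 h3
        by_contra hb
        push_neg at hb
        exact Nat.findGreatest_is_greatest (P := Q) (n := y - 1) h1 (by omega)
          ⟨by omega, hb, h3⟩
      have hq1 : n - 1 ≤ queue (rs + 1) v := by
        have := hqueue rs v
        rw [hQspec.2.2] at this
        rw [if_pos ⟨rfl, by have := hQspec.2.1; rw [hQspec.2.2] at this; omega⟩] at this
        have hbig := hQspec.2.1
        rw [hQspec.2.2] at hbig
        omega
      set G := (Finset.Ico (rs + 1) y).filter (fun τ => token τ = v ∧ 1 ≤ queue τ v)
        with hG
      have hdrain := drain queue token inject v hqueue (rs + 1) y (by omega)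
      have hy0 : queue y v = 0 := by rw [← hy4]; exact hy3
      rw [hy0] at hdrain
      have hGcard : n - 1 ≤ G.card := by
        rw [hG]; omega
      set H := insert y G with hH
      have hynG : y ∉ G := by
        rw [hG, Finset.mem_filter, Finset.mem_Ico]
        intro hc
        omega
      have hHcard : n ≤ H.card := by
        rw [hH, Finset.card_insert_of_notMem hynG]
        omega
      have hHmem : ∀ τ ∈ H, a ≤ τ ∧ τ < a + len ∧ token τ = v ∧ queue τ (token τ) < n ∧
          rs + 1 ≤ τ ∧ τ ≤ y ∧ ∃ σ, a ≤ σ ∧ σ < τ ∧ n ≤ queue σ (token σ) := by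
        intro τ hτ
        rw [hH, Finset.mem_insert] at hτ
        rcases hτ with rfl | hτ
        · exact ⟨hy1, hy2, hy4, by omega, by omega, le_rfl,
            ⟨rs, hQspec.1, by omega, hQspec.2.1⟩⟩
        · rw [hG, Finset.mem_filter, Finset.mem_Ico] at hτ
          obtain ⟨⟨hτ1, hτ2⟩, hτ3, hτ4⟩ := hτ
          have hsm : queue τ (token τ) < n := by
            rcases Nat.lt_or_ge (queue τ (token τ)) n with h | h
            · exact h
            · exact absurd h (by
                have := hrsmax τ (by omega) hτ2 hτ3
                omega)
          exact ⟨by have := hQspec.1; omega, by omega, hτ3, hsm, hτ1, by omega,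
            ⟨rs, hQspec.1, by omega, hQspec.2.1⟩⟩
      -- charges pairwise distinct on H
      have hHinj : ∀ x' ∈ H, ∀ y' ∈ H, x' < y' →
          token (nextBig queue token x') ≠ token (nextBig queue token y') := by
        intro x' hx' y' hy' hlt hsame'
        obtain ⟨ha1, ha2, ha3, ha4, ha5, ha6, ha7⟩ := hHmem x' hx'
        obtain ⟨hb1, hb2, hb3, hb4, hb5, hb6, hb7⟩ := hHmem y' hy'
        obtain ⟨r', hr'1, hr'2, hr'3, hr'4⟩ := inj_charge queue order token inject hstep
          horder0 hqueue a len htot hlt (by rw [ha3, hb3]) ha4 hb4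
          ha1 ha2 hb1 hb2 ha7 hb7 hsame'
        rw [ha3] at hr'4
        have := hrsmax r' (by omega) (by omega) hr'4
        omega
      -- map into univ.erase v
      have hmap : ∀ τ ∈ H, token (nextBig queue token τ) ∈ Finset.univ.erase v := by
        intro τ hτ
        obtain ⟨h1, h2, h3, h4, _, _, h7⟩ := hHmem τ hτ
        have := (chargePos queue order token inject hstep horder0 hqueue a len htot
          h1 h2 h4 h7).1
        rw [h3] at this
        exact Finset.mem_erase.2 ⟨this, Finset.mem_univ _⟩
      have hcard := Finset.card_le_card_of_injOn _ hmap (by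
        intro x' hx' y' hy' hEq
        by_contra hne
        rcases Nat.lt_or_ge x' y' with h | h
        · exact hHinj x' (by simpa using hx') y' (by simpa using hy') h hEq
        · have h' : y' < x' := by omega
          exact hHinj y' (by simpa using hy') x' (by simpa using hx') h' hEq.symm)
      rw [Finset.card_erase_of_mem (Finset.mem_univ v), Finset.card_univ,
        Fintype.card_fin] at hcard
      omega
    -- now F itself has injective charges
    have hmapF : ∀ τ ∈ F, token (nextBig queue token τ) ∈ Finset.univ.erase v := by
      intro τ hτ
      obtain ⟨h1, h2, h3, h4, h5⟩ := hFmem τ hτ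
      have := (chargePos queue order token inject hstep horder0 hqueue a len htot
        h1 h2 (by omega) h5).1
      rw [h4] at this
      exact Finset.mem_erase.2 ⟨this, Finset.mem_univ _⟩
    have hcard := Finset.card_le_card_of_injOn _ hmapF (by
      intro x' hx' y' hy' hEq
      by_contra hne
      rcases Nat.lt_or_ge x' y' with h | h
      · exact hinj x' (by simpa using hx') y' (by simpa using hy') h hEq
      · have h' : y' < x' := by omega
        exact hinj y' (by simpa using hy') x' (by simpa using hx') h' hEq.symm)
    rw [Finset.card_erase_of_mem (Finset.mem_univ v), Finset.card_univ,
      Fintype.card_fin] at hcard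
    exact hcard

end Dyn5

section Dyn6

variable {n : ℕ}
  (queue : ℕ → Fin n → ℕ)
  (order : ℕ → List (Fin n))
  (token : ℕ → Fin n)
  (inject : ℕ → Fin n → ℕ)
  (hstep : Step queue order token)
  (horder0 : order 0 = List.finRange n)
  (hqueue : ∀ t p, queue (t + 1) p =
      queue t p + inject t p - (if p = token t ∧ 1 ≤ queue t p then 1 else 0))
  (a len : ℕ)
  (htot : ∀ t ∈ Finset.Ico a (a + len), n ^ 2 ≤ ∑ p, queue t p)

include hstep horder0 hqueue htot

lemma head_count :
    ((Finset.Ico a (a + len)).filter (fun t => queue t (token t) = 0 ∧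
      ¬∃ σ ∈ Finset.Ico a t, n ≤ queue σ (token σ))).card ≤ n - 1 := by
  classical
  have hn : 0 < n := (token 0).pos
  set Fh := (Finset.Ico a (a + len)).filter (fun t => queue t (token t) = 0 ∧
      ¬∃ σ ∈ Finset.Ico a t, n ≤ queue σ (token σ)) with hFh
  rcases Finset.eq_empty_or_nonempty Fh with he | hne
  · rw [he]; simp
  · set th := Fh.max' hne with hth
    have hthm := Fh.max'_mem hne
    rw [← hth] at hthm
    have hthm2 : th ∈ (Finset.Ico a (a + len)).filter (fun t => queue t (token t) = 0 ∧
      ¬∃ σ ∈ Finset.Ico a t, n ≤ queue σ (token σ)) := hthm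
    rw [Finset.mem_filter, Finset.mem_Ico] at hthm2
    clear hthm
    have hthm := hthm2
    obtain ⟨⟨h1, h2⟩, h3, h4⟩ := hthm
    push_neg at h4
    have hallsmall : ∀ ρ, a ≤ ρ → ρ ≤ th → queue ρ (token ρ) < n := by
      intro ρ hρ1 hρ2
      rcases Nat.eq_or_lt_of_le hρ2 with rfl | hlt
      · omega
      · have := h4 ρ (Finset.mem_Ico.2 ⟨hρ1, hlt⟩)
        omega
    have hbound : th + 2 ≤ a + n := by
      by_contra hc
      push_neg at hc
      refine lem5 queue order token inject hstep horder0 hqueue a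
        (htot a (Finset.mem_Ico.2 ⟨le_rfl, by omega⟩)) ?_
      intro i hi
      exact hallsmall (a + i) (by omega) (by omega)
    have hsub : Fh ⊆ Finset.Ico a (th + 1) := by
      intro x hx
      have hxle : x ≤ th := Finset.le_max' _ _ hx
      rw [hFh, Finset.mem_filter, Finset.mem_Ico] at hx
      exact Finset.mem_Ico.2 ⟨hx.1.1, by omega⟩
    have := Finset.card_le_card hsub
    rw [Nat.card_Ico] at this
    omega

lemma main_part1 :
    ((Finset.Ico a (a + len)).filter (fun t => queue t (token t) = 0)).card < n ^ 2 := by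
  classical
  have hn : 0 < n := (token 0).pos
  set S := (Finset.Ico a (a + len)).filter (fun t => queue t (token t) = 0) with hS
  set Ch : ℕ → Prop := fun t => ∃ σ ∈ Finset.Ico a t, n ≤ queue σ (token σ) with hCh
  have hsplit := Finset.card_filter_add_card_filter_not (s := S) (p := Ch)
  have hchpart : (S.filter Ch).card ≤ n * (n - 1) := by
    have hsub : S.filter Ch ⊆ Finset.univ.biUnion (fun v : Fin n =>
        (Finset.Ico a (a + len)).filter (fun t => queue t (token t) = 0 ∧ token t = v ∧
          ∃ σ ∈ Finset.Ico a t, n ≤ queue σ (token σ))) := by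
      intro t ht
      rw [Finset.mem_filter] at ht
      obtain ⟨htS, htCh⟩ := ht
      rw [hS, Finset.mem_filter] at htS
      refine Finset.mem_biUnion.2 ⟨token t, Finset.mem_univ _, ?_⟩
      rw [Finset.mem_filter]
      exact ⟨htS.1, htS.2, rfl, htCh⟩
    refine le_trans (Finset.card_le_card hsub) ?_
    refine le_trans (Finset.card_biUnion_le) ?_
    refine le_trans (Finset.sum_le_sum (fun v _ =>
      perv queue order token inject hstep horder0 hqueue a len htot v)) ?_
    rw [Finset.sum_const, Finset.card_univ, Fintype.card_fin, smul_eq_mul]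
  have hhead : (S.filter (fun t => ¬Ch t)).card ≤ n - 1 := by
    have : S.filter (fun t => ¬Ch t) = (Finset.Ico a (a + len)).filter
        (fun t => queue t (token t) = 0 ∧ ¬∃ σ ∈ Finset.Ico a t, n ≤ queue σ (token σ)) := by
      rw [hS, Finset.filter_filter]
    rw [this]
    exact head_count queue order token inject hstep horder0 hqueue a len htot
  obtain ⟨m, rfl⟩ : ∃ m, n = m + 1 := ⟨n - 1, by omega⟩
  simp only [Nat.add_sub_cancel] at hchpart hhead
  have hring : (m + 1) * m + m + 1 = (m + 1) ^ 2 := by ring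
  omega

end Dyn6

section Part2

variable {n : ℕ}
  (queue : ℕ → Fin n → ℕ)
  (token : ℕ → Fin n)
  (inject : ℕ → Fin n → ℕ)
  (hqueue : ∀ t p, queue (t + 1) p =
      queue t p + inject t p - (if p = token t ∧ 1 ≤ queue t p then 1 else 0))

include hqueue

lemma tele (t : ℕ) :
    (∑ p, queue (t + 1) p) + (if 1 ≤ queue t (token t) then 1 else 0)
      = (∑ p, queue t p) + ∑ p, inject t p := by
  classical
  have hpt : ∀ p : Fin n, queue (t + 1) p + (if p = token t ∧ 1 ≤ queue t p then 1 else 0)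
      = queue t p + inject t p := by
    intro p
    rw [hqueue t p]
    split_ifs with h
    · have : 1 ≤ queue t p := h.2
      omega
    · omega
  have hsum : ∑ p, (queue (t + 1) p + (if p = token t ∧ 1 ≤ queue t p then 1 else 0))
      = ∑ p, (queue t p + inject t p) := Finset.sum_congr rfl (fun p _ => hpt p)
  rw [Finset.sum_add_distrib, Finset.sum_add_distrib] at hsum
  have hite : ∑ p, (if p = token t ∧ 1 ≤ queue t p then 1 else 0)
      = (if 1 ≤ queue t (token t) then 1 else 0) := by
    have : ∀ p : Fin n, (if p = token t ∧ 1 ≤ queue t p then 1 else 0)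
        = (if p = token t then (if 1 ≤ queue t (token t) then 1 else 0) else 0) := by
      intro p
      by_cases hp : p = token t
      · subst hp; simp
      · simp [hp]
    rw [Finset.sum_congr rfl (fun p _ => this p), Finset.sum_ite_eq' Finset.univ (token t)]
    simp
  rw [hite] at hsum
  exact hsum

lemma acc (α d : ℕ) :
    (∑ p, queue (α + d) p) + (∑ i ∈ Finset.Ico α (α + d),
        (if 1 ≤ queue i (token i) then 1 else 0))
      = (∑ p, queue α p) + ∑ i ∈ Finset.Ico α (α + d), ∑ p, inject i p := by
  classical
  induction d with
  | zero => simp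
  | succ d ih =>
    have hsplit : Finset.Ico α (α + (d + 1)) = insert (α + d) (Finset.Ico α (α + d)) := by
      ext x
      simp only [Finset.mem_Ico, Finset.mem_insert]
      omega
    have hnm : α + d ∉ Finset.Ico α (α + d) := by simp
    rw [hsplit, Finset.sum_insert hnm, Finset.sum_insert hnm,
      show α + (d + 1) = (α + d) + 1 by omega]
    have ht := tele queue token inject hqueue (α + d)
    omega

end Part2

/-- Move-Big-To-Front for `n` stations against the leaky-bucket adversary of type
`(1,b)` (burstiness `b+1`): a token travels along a shared list; the token holder
transmits a packet if it has one; a holder with at least `n` packets is big, is moved to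
the front of the list and keeps the token; otherwise the token moves cyclically to the
next station.  Then in any time segment during which at least `n²` packets are always
queued, the number of silent rounds is less than `n²`; consequently the total number of
queued packets never exceeds `2(n² + b)`. -/
theorem stmt5 (n b : ℕ) (hn : 0 < n)
    (inject : ℕ → Fin n → ℕ)
    (hlb : ∀ a t : ℕ, (∑ i ∈ Finset.Ico a (a + t), ∑ p, inject i p) ≤ t + b)
    (queue : ℕ → Fin n → ℕ)
    (order : ℕ → List (Fin n))
    (token : ℕ → Fin n)
    (horder0 : order 0 = List.finRange n)
    (htoken0 : token 0 = ⟨0, hn⟩)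
    (hq0 : ∀ p, queue 0 p = 0)
    (hqueue : ∀ t p, queue (t + 1) p =
      queue t p + inject t p - (if p = token t ∧ 1 ≤ queue t p then 1 else 0))
    (hbig : ∀ t, n ≤ queue t (token t) →
      order (t + 1) = moveToFront (token t) (order t) ∧ token (t + 1) = token t)
    (hsmall : ∀ t, queue t (token t) < n →
      order (t + 1) = order t ∧ token (t + 1) = nextAfter (token t) (order t)) :
    (∀ a len : ℕ,
      (∀ t ∈ Finset.Ico a (a + len), n ^ 2 ≤ ∑ p, queue t p) →
      ((Finset.Ico a (a + len)).filter (fun t => queue t (token t) = 0)).card < n ^ 2) ∧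
    ∀ t, (∑ p, queue t p) ≤ 2 * (n ^ 2 + b) := by
  classical
  have hstep : Step queue order token := by
    intro t
    rcases Nat.lt_or_ge (queue t (token t)) n with h | h
    · exact Or.inr ⟨h, (hsmall t h).1, (hsmall t h).2⟩
    · exact Or.inl ⟨h, (hbig t h).1, (hbig t h).2⟩
  have hpart1 : ∀ a len : ℕ,
      (∀ t ∈ Finset.Ico a (a + len), n ^ 2 ≤ ∑ p, queue t p) →
      ((Finset.Ico a (a + len)).filter (fun t => queue t (token t) = 0)).card < n ^ 2 :=
    fun a len htot =>
      main_part1 queue order token inject hstep horder0 hqueue a len htot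
  refine ⟨hpart1, ?_⟩
  intro t
  set P : ℕ → Prop := fun s => (∑ p, queue s p) < n ^ 2 with hP
  have hP0 : P 0 := by
    rw [hP]
    simp only [hq0]
    have : (0:ℕ) < n ^ 2 := by positivity
    simpa using this
  by_cases hPt : P t
  · have : n ^ 2 ≤ 2 * (n ^ 2 + b) := by omega
    rw [hP] at hPt
    omega
  · set α := Nat.findGreatest P t with hα
    have hPα : P α := Nat.findGreatest_spec (Nat.zero_le t) hP0
    have hαle : α ≤ t := Nat.findGreatest_le _
    have hαlt : α < t := by
      rcases Nat.lt_or_ge α t with h | h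
      · exact h
      · have heq : α = t := by omega
        rw [heq] at hPα
        exact absurd hPα hPt
    have hgt : ∀ s, α < s → s ≤ t → n ^ 2 ≤ ∑ p, queue s p := by
      intro s h1 h2
      by_contra hc
      push_neg at hc
      exact Nat.findGreatest_is_greatest h1 h2 hc
    set d := t - α - 1 with hd
    have htd : t = α + 1 + d := by omega
    have htotseg : ∀ s ∈ Finset.Ico (α + 1) (α + 1 + d), n ^ 2 ≤ ∑ p, queue s p := by
      intro s hs
      rw [Finset.mem_Ico] at hs
      exact hgt s (by omega) (by omega)
    have hsil := hpart1 (α + 1) d htotseg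
    set sil := ((Finset.Ico (α + 1) (α + 1 + d)).filter
      (fun s => queue s (token s) = 0)).card with hsil'
    have hacc := acc queue token inject hqueue (α + 1) d
    -- transmissions lower bound
    set T := ∑ i ∈ Finset.Ico (α + 1) (α + 1 + d), (if 1 ≤ queue i (token i) then 1 else 0)
      with hT
    have hTlow : d ≤ T + sil := by
      have hcards : (Finset.Ico (α + 1) (α + 1 + d)).card =
          ((Finset.Ico (α + 1) (α + 1 + d)).filter (fun s => queue s (token s) = 0)).card
          + ((Finset.Ico (α + 1) (α + 1 + d)).filter
              (fun s => ¬queue s (token s) = 0)).card :=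
        (Finset.card_filter_add_card_filter_not _).symm
      rw [Nat.card_Ico] at hcards
      have hTge : ((Finset.Ico (α + 1) (α + 1 + d)).filter
          (fun s => ¬queue s (token s) = 0)).card ≤ T := by
        rw [hT]
        calc ((Finset.Ico (α + 1) (α + 1 + d)).filter
              (fun s => ¬queue s (token s) = 0)).card
            = ∑ i ∈ (Finset.Ico (α + 1) (α + 1 + d)).filter
                (fun s => ¬queue s (token s) = 0), 1 := by
              rw [Finset.sum_const, smul_eq_mul, mul_one]
          _ = ∑ i ∈ (Finset.Ico (α + 1) (α + 1 + d)).filter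
                (fun s => ¬queue s (token s) = 0),
                (if 1 ≤ queue i (token i) then 1 else 0) := by
              refine Finset.sum_congr rfl ?_
              intro i hi
              rw [Finset.mem_filter] at hi
              rw [if_pos (by omega)]
          _ ≤ _ := Finset.sum_le_sum_of_subset (Finset.filter_subset _ _)
      omega
    -- injection bounds
    have hinjseg : (∑ i ∈ Finset.Ico (α + 1) (α + 1 + d), ∑ p, inject i p) ≤ d + b :=
      hlb (α + 1) d
    have hinjα : (∑ p, inject α p) ≤ 1 + b := by
      have := hlb α 1
      rw [show α + 1 = α + 1 by rfl] at this
      have hsing : Finset.Ico α (α + 1) = {α} := by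
        ext x
        simp only [Finset.mem_Ico, Finset.mem_singleton]
        omega
      rw [hsing, Finset.sum_singleton] at this
      omega
    have hstep1 : (∑ p, queue (α + 1) p) ≤ n ^ 2 + b := by
      have ht1 := tele queue token inject hqueue α
      rw [hP] at hPα
      have : (if 1 ≤ queue α (token α) then 1 else 0) ≤ 1 := by split_ifs <;> omega
      omega
    rw [hP] at hPα
    rw [show t = α + 1 + d by omega]
    omega
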